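/- Let 𝒜 be a Hom-finite Krull-Schmidt triangulated k-category with Serre functor F, let d ∈ ℤ, and set G := [−d]∘F. Then the map sending a finite ⟨G⟩-orbit 𝒪_M of an indecomposable M in Ind(𝒜) to the direct sum ⊕_{X ∈ 𝒪_M} X = M ⊕ G(M) ⊕ ⋯ ⊕ G^{o(G_M)−1}(M) is a one-to-one correspondence between the set of finite ⟨G⟩-orbits of Ind(𝒜) and the set of isomorphism classes of minimal d-th Calabi-Yau objects of 𝒜. -/

import Mathlib

open CategoryTheory CategoryTheory.Limits CategoryTheory.Pretriangulated

universe v u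

namespace CYPaper

variable (k : Type u) [Field k]
variable (C : Type u) [Category.{v} C] [Preadditive C] [Linear k C]
  [HasZeroObject C] [HasShift C ℤ] [∀ n : ℤ, (shiftFunctor C n).Additive]
  [Pretriangulated C]

/-- `X` is a `d`-th Calabi-Yau object: there is an isomorphism
`Hom(X,-) ≅ D Hom(-, X⟦d⟧)`, natural in the variable. -/
def IsCYObj (d : ℤ) (X : C) : Prop :=
  ¬ IsZero X ∧
    ∃ η : ∀ Z : C, (X ⟶ Z) ≃ₗ[k] Module.Dual k (Z ⟶ X⟦d⟧),
      ∀ {Z W : C} (f : Z ⟶ W) (u : X ⟶ Z) (w : W ⟶ X⟦d⟧),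
        η W (u ≫ f) w = η Z u (f ≫ w)

variable {C}

/-- A biproduct decomposition `X ≅ A ⊕ B`, expressed without assuming
the existence of biproducts. -/
def IsDecomp (X A B : C) : Prop :=
  ∃ (iA : A ⟶ X) (iB : B ⟶ X) (pA : X ⟶ A) (pB : X ⟶ B),
    iA ≫ pA = 𝟙 A ∧ iB ≫ pB = 𝟙 B ∧ iA ≫ pB = 0 ∧ iB ≫ pA = 0 ∧
      pA ≫ iA + pB ≫ iB = 𝟙 X

/-- A direct sum decomposition `X ≅ X₁ ⊕ ⋯ ⊕ X_r`. -/
def IsDirectSumDecomp (X : C) {r : ℕ} (Xs : Fin r → C) : Prop :=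
  ∃ (ι : ∀ j, Xs j ⟶ X) (π : ∀ j, X ⟶ Xs j),
    (∀ j, ι j ≫ π j = 𝟙 (Xs j)) ∧ (∀ j j', j ≠ j' → ι j ≫ π j' = 0) ∧
      (∑ j, π j ≫ ι j) = 𝟙 X

/-- An object is indecomposable if it is non-zero and admits no non-trivial
direct sum decomposition. -/
def Indec (X : C) : Prop :=
  ¬ IsZero X ∧ ∀ A B : C, IsDecomp X A B → IsZero A ∨ IsZero B

variable (C) in
/-- The category is Krull-Schmidt: Hom-finite and any indecomposable object has
local endomorphism ring. -/
def KrullSchmidt : Prop :=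
  ∀ X : C, Indec X → IsLocalRing (End X)

/-- Auslander-Reiten triangle. -/
def IsARTriangle (T : Triangle C) : Prop :=
  (T ∈ distTriang C) ∧ Indec T.obj₁ ∧ Indec T.obj₃ ∧ T.mor₃ ≠ 0 ∧
    ∀ (Z' : C) (t : Z' ⟶ T.obj₃),
      (¬ ∃ s : T.obj₃ ⟶ Z', s ≫ t = 𝟙 T.obj₃) → ∃ t' : Z' ⟶ T.obj₂, t = t' ≫ T.mor₂

variable (C) in
/-- A right Serre functor on a Hom-finite `k`-linear category. -/
structure RightSerre where
  F : C ⥤ C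
  additive : F.Additive
  linear : F.Linear k
  η : ∀ A B : C, (A ⟶ B) ≃ₗ[k] Module.Dual k (B ⟶ F.obj A)
  nat_right : ∀ {A B B' : C} (g : B ⟶ B') (u : A ⟶ B) (w : B' ⟶ F.obj A),
    η A B' (u ≫ g) w = η A B u (g ≫ w)
  nat_left : ∀ {A A' B : C} (f : A' ⟶ A) (u : A ⟶ B) (w : B ⟶ F.obj A'),
    η A' B (f ≫ u) w = η A B u (w ≫ F.map f)

variable (C) in
/-- A Serre functor: a right Serre functor which is an equivalence. -/
structure Serre extends RightSerre k C where
  isEquiv : F.IsEquivalence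

/-- A minimal `d`-th Calabi-Yau object: a `d`-th CY object no proper direct
summand of which is a `d`-th CY object. -/
def IsMinCYObj (d : ℤ) (X : C) : Prop :=
  IsCYObj k C d X ∧
    ∀ A B : C, IsDecomp X A B → ¬ IsZero B → ¬ IsCYObj k C d A

end CYPaper

open CategoryTheory CategoryTheory.Limits CategoryTheory.Pretriangulated CYPaper

namespace CYPaper

variable {k : Type u} [Field k]
variable {C : Type u} [Category.{v} C] [Preadditive C] [Linear k C]
  [HasZeroObject C] [HasShift C ℤ] [∀ n : ℤ, (shiftFunctor C n).Additive]
  [Pretriangulated C]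

/-- The object-level action of `G := [-d] ∘ F`. -/
def Gobj (S : Serre k C) (d : ℤ) (X : C) : C := (S.F.obj X)⟦-d⟧

/-- Iterates of `G` on objects. -/
def Gpow (S : Serre k C) (d : ℤ) : ℕ → C → C
  | 0, X => X
  | n + 1, X => Gobj S d (Gpow S d n X)

/-- `M` has a finite `⟨G⟩`-orbit. -/
def FiniteGOrbit (S : Serre k C) (d : ℤ) (M : C) : Prop :=
  ∃ r : ℕ, 0 < r ∧ Nonempty (Gpow S d r M ≅ M)

/-- The relative order `o(G_M)` of `G` with respect to `M`. -/
noncomputable def oG (S : Serre k C) (d : ℤ) (M : C) : ℕ :=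
  sInf {r : ℕ | 0 < r ∧ Nonempty (Gpow S d r M ≅ M)}

/-- `M` and `M'` lie in the same `⟨G⟩`-orbit. -/
def SameGOrbit (S : Serre k C) (d : ℤ) (M M' : C) : Prop :=
  ∃ j : ℕ, Nonempty (Gpow S d j M ≅ M')

/-- The orbit sum `M ⊕ G(M) ⊕ ⋯ ⊕ G^{o(G_M)-1}(M)`. -/
noncomputable def orbitSum [HasFiniteBiproducts C] (S : Serre k C) (d : ℤ) (M : C) : C :=
  ⨁ (fun j : Fin (oG S d M) => Gpow S d (j : ℕ) M)

end CYPaper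

namespace CYPaper

section Algebra

variable {R : Type*} [Ring R] [IsLocalRing R]

lemma isUnit_of_add_isUnit {a b : R} (h : IsUnit (a + b)) : IsUnit a ∨ IsUnit b := by
  obtain ⟨u, hu⟩ := h
  have h1 : a * ↑u⁻¹ + b * ↑u⁻¹ = 1 := by
    rw [← add_mul, ← hu, Units.mul_inv]
  rcases IsLocalRing.isUnit_or_isUnit_of_add_one h1 with h | h
  · left
    have := h.mul u.isUnit
    rwa [mul_assoc, Units.inv_mul, mul_one] at this
  · right
    have := h.mul u.isUnit
    rwa [mul_assoc, Units.inv_mul, mul_one] at this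

lemma isUnit_of_sum_isUnit {ι : Type*} (s : Finset ι) (f : ι → R)
    (h : IsUnit (∑ i ∈ s, f i)) : ∃ i ∈ s, IsUnit (f i) := by
  classical
  induction s using Finset.induction_on with
  | empty =>
    simp only [Finset.sum_empty] at h
    rw [isUnit_zero_iff] at h
    exact absurd h.symm one_ne_zero
  | insert a s' hnot ih =>
    rw [Finset.sum_insert hnot] at h
    rcases isUnit_of_add_isUnit h with h | h
    · exact ⟨a, Finset.mem_insert_self a s', h⟩
    · obtain ⟨i, hi, hu⟩ := ih h
      exact ⟨i, Finset.mem_insert_of_mem hi, hu⟩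

lemma idem_zero_or_one {e : R} (he : e * e = e) : e = 0 ∨ e = 1 := by
  by_cases h : IsUnit e
  · right
    obtain ⟨u, hu⟩ := h
    have h2 : (↑u⁻¹ : R) * (e * e) = ↑u⁻¹ * e := by rw [he]
    rw [← hu, ← mul_assoc, Units.inv_mul, one_mul] at h2
    rw [← hu, h2]
  · left
    have h2 : e * (1 - e) = 0 := by rw [mul_sub, mul_one, he, sub_self]
    have h1 : IsUnit (e + (1 - e)) := by
      rw [add_sub_cancel]; exact isUnit_one
    rcases isUnit_of_add_isUnit h1 with h' | h'
    · exact absurd h' h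
    · obtain ⟨u, hu⟩ := h'
      calc e = e * ((1 - e) * ↑u⁻¹) := by rw [← hu, Units.mul_inv, mul_one]
      _ = e * (1 - e) * ↑u⁻¹ := by rw [mul_assoc]
      _ = 0 := by rw [h2, zero_mul]

end Algebra

end CYPaper

namespace CYPaper
set_option linter.unusedSectionVars false

variable {k : Type u} [Field k]
variable {C : Type u} [Category.{v} C] [Preadditive C] [Linear k C]
  [HasZeroObject C] [HasShift C ℤ] [∀ n : ℤ, (shiftFunctor C n).Additive]
  [Pretriangulated C]

section EndLemmas

lemma isZero_of_id_zero {X : C} (h : 𝟙 X = 0) : IsZero X :=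
  (IsZero.iff_id_eq_zero X).mpr h

lemma not_isZero_id_ne {X : C} (h : ¬ IsZero X) : 𝟙 X ≠ 0 := by
  intro h'; exact h (isZero_of_id_zero h')

lemma exists_inv_of_sum_eq_id {N : C} (hloc : IsLocalRing (End N)) {ι : Type}
    [Fintype ι] (a : ι → (N ⟶ N)) (ha : ∑ i, a i = 𝟙 N) :
    ∃ i, ∃ g : N ⟶ N, a i ≫ g = 𝟙 N ∧ g ≫ a i = 𝟙 N := by
  let b : ι → End N := fun i => a i
  have ha' : (∑ i, b i) = (1 : End N) := ha
  have hu : IsUnit (∑ i, b i) := by rw [ha']; exact isUnit_one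
  rw [← Finset.sum_coe_sort Finset.univ b] at hu
  obtain ⟨i, _, hi⟩ := isUnit_of_sum_isUnit Finset.univ b (by
    rwa [Finset.sum_coe_sort] at hu)
  obtain ⟨u, huu⟩ := hi
  refine ⟨i, (↑u⁻¹ : End N), ?_, ?_⟩
  · have : (↑u⁻¹ : End N) * (b i) = 1 := by rw [← huu, Units.inv_mul]
    exact this
  · have : (b i : End N) * ↑u⁻¹ = 1 := by rw [← huu, Units.mul_inv]
    exact this

lemma idem_comp_eq {N : C} (hloc : IsLocalRing (End N)) {e : N ⟶ N}
    (he : e ≫ e = e) : e = 0 ∨ e = 𝟙 N := by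
  let e' : End N := e
  have he' : e' * e' = e' := he
  exact idem_zero_or_one (R := End N) he'

end EndLemmas

section Smd

/-- `N` is a direct summand of `A`. -/
def Smd (N A : C) : Prop := ∃ (s : N ⟶ A) (t : A ⟶ N), s ≫ t = 𝟙 N

lemma Smd.refl (N : C) : Smd N N := ⟨𝟙 N, 𝟙 N, by simp⟩

lemma Smd.trans {N A B : C} (h1 : Smd N A) (h2 : Smd A B) : Smd N B := by
  obtain ⟨s, t, hst⟩ := h1
  obtain ⟨s', t', hst'⟩ := h2
  exact ⟨s ≫ s', t' ≫ t, by rw [Category.assoc, ← Category.assoc s', hst',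
    Category.id_comp, hst]⟩

lemma Smd.of_iso_left {N N' A : C} (e : N' ≅ N) (h : Smd N A) : Smd N' A :=
  Smd.trans ⟨e.hom, e.inv, e.hom_inv_id⟩ h

lemma Smd.of_iso_right {N A A' : C} (e : A ≅ A') (h : Smd N A) : Smd N A' :=
  Smd.trans h ⟨e.hom, e.inv, e.hom_inv_id⟩

lemma Smd.isZero {N A : C} (h : Smd N A) (hA : IsZero A) : IsZero N := by
  obtain ⟨s, t, hst⟩ := h
  have : t = 0 := hA.eq_of_src t 0
  apply isZero_of_id_zero
  rw [← hst, this, Limits.comp_zero]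

lemma Smd.map {N A : C} (F : C ⥤ C) (h : Smd N A) : Smd (F.obj N) (F.obj A) := by
  obtain ⟨s, t, hst⟩ := h
  exact ⟨F.map s, F.map t, by rw [← F.map_comp, hst, F.map_id]⟩

end Smd

section DSDDef

/-- A direct sum decomposition over an arbitrary finite index type. -/
def DSD (X : C) {ι : Type} [Fintype ι] (Xs : ι → C) : Prop :=
  ∃ (i : ∀ j, Xs j ⟶ X) (p : ∀ j, X ⟶ Xs j),
    (∀ j, i j ≫ p j = 𝟙 (Xs j)) ∧ (∀ j j', j ≠ j' → i j ≫ p j' = 0) ∧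
      (∑ j, p j ≫ i j) = 𝟙 X

lemma DSD.smd {X : C} {ι : Type} [Fintype ι] {Xs : ι → C} (h : DSD X Xs) (j : ι) :
    Smd (Xs j) X := by
  obtain ⟨i, p, h1, _, _⟩ := h
  exact ⟨i j, p j, h1 j⟩

lemma DSD.of_iso {X X' : C} {ι : Type} [Fintype ι] {Xs : ι → C} (e : X ≅ X')
    (h : DSD X Xs) : DSD X' Xs := by
  obtain ⟨i, p, h1, h2, h3⟩ := h
  refine ⟨fun j => i j ≫ e.hom, fun j => e.inv ≫ p j, fun j => ?_, fun j j' hne => ?_, ?_⟩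
  · rw [Category.assoc, e.hom_inv_id_assoc, h1]
  · rw [Category.assoc, e.hom_inv_id_assoc, h2 j j' hne]
  · have : (∑ j, (e.inv ≫ p j) ≫ (i j ≫ e.hom)) = e.inv ≫ (∑ j, p j ≫ i j) ≫ e.hom := by
      rw [Preadditive.sum_comp, Preadditive.comp_sum]
      simp [Category.assoc]
    rw [this, h3, Category.id_comp, e.inv_hom_id]

lemma DSD.congr {X : C} {ι : Type} [Fintype ι] {Xs Ys : ι → C}
    (e : ∀ j, Xs j ≅ Ys j) (h : DSD X Xs) : DSD X Ys := by
  obtain ⟨i, p, h1, h2, h3⟩ := h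
  refine ⟨fun j => (e j).inv ≫ i j, fun j => p j ≫ (e j).hom, fun j => ?_,
    fun j j' hne => ?_, ?_⟩
  · rw [Category.assoc, ← Category.assoc (i j), h1, Category.id_comp, (e j).inv_hom_id]
  · rw [Category.assoc, ← Category.assoc (i j), h2 j j' hne, Limits.zero_comp,
      Limits.comp_zero]
  · have : (∑ j, (p j ≫ (e j).hom) ≫ ((e j).inv ≫ i j)) = ∑ j, p j ≫ i j := by
      apply Finset.sum_congr rfl
      intro j _
      rw [Category.assoc, ← Category.assoc (e j).hom, (e j).hom_inv_id, Category.id_comp]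
    rw [this, h3]

lemma DSD.reindex {X : C} {ι κ : Type} [Fintype ι] [Fintype κ] {Xs : ι → C}
    (e : κ ≃ ι) (h : DSD X Xs) : DSD X (Xs ∘ e) := by
  obtain ⟨i, p, h1, h2, h3⟩ := h
  refine ⟨fun j => i (e j), fun j => p (e j), fun j => h1 (e j),
    fun j j' hne => h2 _ _ (fun hh => hne (e.injective hh)), ?_⟩
  rw [← h3]
  exact Fintype.sum_equiv e _ _ (fun j => rfl)

end DSDDef

end CYPaper

namespace CYPaper

set_option linter.unusedSectionVars false

variable {k : Type u} [Field k]
variable {C : Type u} [Category.{v} C] [Preadditive C] [Linear k C]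
  [HasZeroObject C] [HasShift C ℤ] [∀ n : ℤ, (shiftFunctor C n).Additive]
  [Pretriangulated C]

section Biprod

variable [HasFiniteBiproducts C]

lemma dsd_biproduct {ι : Type} [Fintype ι] (Xs : ι → C) : DSD (⨁ Xs) Xs := by
  classical
  refine ⟨biproduct.ι Xs, biproduct.π Xs, fun j => biproduct.ι_π_self Xs j,
    fun j j' hne => biproduct.ι_π_ne Xs hne, biproduct.total⟩

lemma DSD.isoBiproduct {X : C} {ι : Type} [Fintype ι] {Xs : ι → C}
    (h : DSD X Xs) : Nonempty (X ≅ ⨁ Xs) := by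
  classical
  obtain ⟨i, p, h1, h2, h3⟩ := h
  refine ⟨⟨biproduct.lift p, biproduct.desc i, ?_, ?_⟩⟩
  · rw [biproduct.lift_desc, h3]
  · apply biproduct.hom_ext
    intro j
    rw [Category.assoc, biproduct.lift_π, Category.id_comp]
    apply biproduct.hom_ext'
    intro j'
    rw [biproduct.ι_desc_assoc]
    by_cases hjj : j' = j
    · subst hjj
      rw [h1, biproduct.ι_π_self]
    · rw [h2 j' j hjj, biproduct.ι_π_ne Xs hjj]

/-- Componentwise isos along an equivalence of index types give an iso of
biproducts. -/
lemma biprodIso {ι κ : Type} [Fintype ι] [Fintype κ] (e : ι ≃ κ)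
    (f : ι → C) (g : κ → C) (c : ∀ i, f i ≅ g (e i)) : Nonempty (⨁ f ≅ ⨁ g) := by
  have h1 : DSD (⨁ f) f := dsd_biproduct f
  have h2 : DSD (⨁ f) (g ∘ e) := DSD.congr (fun i => c i) h1
  have h3 : DSD (⨁ f) g := by
    have := DSD.reindex e.symm h2
    have heq : ((g ∘ ⇑e) ∘ ⇑e.symm) = g := by
      funext x; simp
    rwa [heq] at this
  obtain ⟨iso⟩ := h3.isoBiproduct
  exact ⟨iso⟩

lemma dsd_sum {X A B : C} {ιA ιB : Type} [Fintype ιA] [Fintype ιB]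
    {As : ιA → C} {Bs : ιB → C} (hd : IsDecomp X A B) (hA : DSD A As)
    (hB : DSD B Bs) : DSD X (Sum.elim As Bs) := by
  obtain ⟨iA, iB, pA, pB, e1, e2, e3, e4, e5⟩ := hd
  obtain ⟨ia, pa, f1, f2, f3⟩ := hA
  obtain ⟨ib, pb, g1, g2, g3⟩ := hB
  refine ⟨fun j => Sum.rec (fun a => ia a ≫ iA) (fun b => ib b ≫ iB) j,
    fun j => Sum.rec (fun a => pA ≫ pa a) (fun b => pB ≫ pb b) j,
    ?_, ?_, ?_⟩
  · rintro (a | b)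
    · show (ia a ≫ iA) ≫ (pA ≫ pa a) = _
      rw [Category.assoc, ← Category.assoc iA, e1, Category.id_comp, f1]; rfl
    · show (ib b ≫ iB) ≫ (pB ≫ pb b) = _
      rw [Category.assoc, ← Category.assoc iB, e2, Category.id_comp, g1]; rfl
  · rintro (a | b) (a' | b') hne
    · show (ia a ≫ iA) ≫ (pA ≫ pa a') = 0
      rw [Category.assoc, ← Category.assoc iA, e1, Category.id_comp,
        f2 a a' (by rintro rfl; exact hne rfl)]
    · show (ia a ≫ iA) ≫ (pB ≫ pb b') = 0
      rw [Category.assoc, ← Category.assoc iA, e3, Limits.zero_comp, Limits.comp_zero]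
    · show (ib b ≫ iB) ≫ (pA ≫ pa a') = 0
      rw [Category.assoc, ← Category.assoc iB, e4, Limits.zero_comp, Limits.comp_zero]
    · show (ib b ≫ iB) ≫ (pB ≫ pb b') = 0
      rw [Category.assoc, ← Category.assoc iB, e2, Category.id_comp,
        g2 b b' (by rintro rfl; exact hne rfl)]
  · rw [Fintype.sum_sum_type]
    have hA' : (∑ a, (pA ≫ pa a) ≫ (ia a ≫ iA)) = pA ≫ iA := by
      have h' : (∑ a, (pA ≫ pa a) ≫ (ia a ≫ iA)) = pA ≫ (∑ a, pa a ≫ ia a) ≫ iA := by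
        rw [Preadditive.sum_comp, Preadditive.comp_sum]
        exact Finset.sum_congr rfl (fun a _ => by simp [Category.assoc])
      rw [h', f3, Category.id_comp]
    have hB' : (∑ b, (pB ≫ pb b) ≫ (ib b ≫ iB)) = pB ≫ iB := by
      have h' : (∑ b, (pB ≫ pb b) ≫ (ib b ≫ iB)) = pB ≫ (∑ b, pb b ≫ ib b) ≫ iB := by
        rw [Preadditive.sum_comp, Preadditive.comp_sum]
        exact Finset.sum_congr rfl (fun b _ => by simp [Category.assoc])
      rw [h', g3, Category.id_comp]
    show (∑ a, (pA ≫ pa a) ≫ (ia a ≫ iA)) + (∑ b, (pB ≫ pb b) ≫ (ib b ≫ iB)) = 𝟙 X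
    rw [hA', hB', e5]

lemma dsd_partition {X : C} {ι : Type} [Fintype ι] {Xs : ι → C} (h : DSD X Xs)
    (P : ι → Prop) [DecidablePred P] :
    IsDecomp X (⨁ fun i : {i // P i} => Xs i) (⨁ fun i : {i // ¬ P i} => Xs i) := by
  classical
  obtain ⟨i, p, h1, h2, h3⟩ := h
  refine ⟨biproduct.desc (fun a => i a.1), biproduct.desc (fun b => i b.1),
    biproduct.lift (fun a => p a.1), biproduct.lift (fun b => p b.1), ?_, ?_, ?_, ?_, ?_⟩
  · apply biproduct.hom_ext'
    intro a
    rw [biproduct.ι_desc_assoc, Category.comp_id]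
    apply biproduct.hom_ext
    intro a'
    rw [Category.assoc, biproduct.lift_π]
    by_cases haa : a = a'
    · subst haa; rw [h1, biproduct.ι_π_self]
    · rw [h2 a.1 a'.1 (fun hh => haa (Subtype.ext hh)), biproduct.ι_π_ne _ haa]
  · apply biproduct.hom_ext'
    intro b
    rw [biproduct.ι_desc_assoc, Category.comp_id]
    apply biproduct.hom_ext
    intro b'
    rw [Category.assoc, biproduct.lift_π]
    by_cases hbb : b = b'
    · subst hbb; rw [h1, biproduct.ι_π_self]
    · rw [h2 b.1 b'.1 (fun hh => hbb (Subtype.ext hh)), biproduct.ι_π_ne _ hbb]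
  · apply biproduct.hom_ext'
    intro a
    rw [biproduct.ι_desc_assoc, Limits.comp_zero]
    apply biproduct.hom_ext
    intro b
    rw [Category.assoc, biproduct.lift_π, Limits.zero_comp]
    exact h2 a.1 b.1 (fun hh => b.2 (hh ▸ a.2))
  · apply biproduct.hom_ext'
    intro b
    rw [biproduct.ι_desc_assoc, Limits.comp_zero]
    apply biproduct.hom_ext
    intro a
    rw [Category.assoc, biproduct.lift_π, Limits.zero_comp]
    exact h2 b.1 a.1 (fun hh => b.2 (hh ▸ a.2))
  · rw [biproduct.lift_desc, biproduct.lift_desc]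
    have : (∑ a : {i // P i}, p a.1 ≫ i a.1) + (∑ b : {i // ¬ P i}, p b.1 ≫ i b.1)
        = ∑ j, p j ≫ i j := Fintype.sum_subtype_add_sum_subtype P (fun j => p j ≫ i j)
    rw [this, h3]

end Biprod

section DecompLemmas

lemma IsDecomp.of_iso {X X' A B : C} (e : X ≅ X') (h : IsDecomp X A B) :
    IsDecomp X' A B := by
  obtain ⟨iA, iB, pA, pB, e1, e2, e3, e4, e5⟩ := h
  refine ⟨iA ≫ e.hom, iB ≫ e.hom, e.inv ≫ pA, e.inv ≫ pB, ?_, ?_, ?_, ?_, ?_⟩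
  · rw [Category.assoc, e.hom_inv_id_assoc, e1]
  · rw [Category.assoc, e.hom_inv_id_assoc, e2]
  · rw [Category.assoc, e.hom_inv_id_assoc, e3]
  · rw [Category.assoc, e.hom_inv_id_assoc, e4]
  · have : (e.inv ≫ pA) ≫ iA ≫ e.hom + (e.inv ≫ pB) ≫ iB ≫ e.hom
        = e.inv ≫ (pA ≫ iA + pB ≫ iB) ≫ e.hom := by
      rw [Preadditive.add_comp, Preadditive.comp_add]
      simp [Category.assoc]
    rw [this, e5, Category.id_comp, e.inv_hom_id]

lemma IsDecomp.map {X A B : C} (F : C ⥤ C) [F.Additive] (h : IsDecomp X A B) :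
    IsDecomp (F.obj X) (F.obj A) (F.obj B) := by
  obtain ⟨iA, iB, pA, pB, e1, e2, e3, e4, e5⟩ := h
  refine ⟨F.map iA, F.map iB, F.map pA, F.map pB, ?_, ?_, ?_, ?_, ?_⟩
  · rw [← F.map_comp, e1, F.map_id]
  · rw [← F.map_comp, e2, F.map_id]
  · rw [← F.map_comp, e3, F.map_zero]
  · rw [← F.map_comp, e4, F.map_zero]
  · rw [← F.map_comp, ← F.map_comp, ← F.map_add, e5, F.map_id]

/-- Complements of the same split inclusion are isomorphic. -/
lemma complement_iso {X A B B' : C} (iA : A ⟶ X)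
    (iB : B ⟶ X) (pA : X ⟶ A) (pB : X ⟶ B)
    (iB' : B' ⟶ X) (pA' : X ⟶ A) (pB' : X ⟶ B')
    (e2 : iB ≫ pB = 𝟙 B) (e3 : iA ≫ pB = 0)
    (e5 : pA ≫ iA + pB ≫ iB = 𝟙 X)
    (f2 : iB' ≫ pB' = 𝟙 B') (f3 : iA ≫ pB' = 0)
    (f5 : pA' ≫ iA + pB' ≫ iB' = 𝟙 X) : Nonempty (B ≅ B') := by
  refine ⟨⟨iB ≫ pB', iB' ≫ pB, ?_, ?_⟩⟩
  · have h1 : pB' ≫ iB' = 𝟙 X - pA' ≫ iA := by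
      rw [← f5]; abel
    rw [Category.assoc, ← Category.assoc pB', h1]
    simp [Preadditive.sub_comp, Preadditive.comp_sub, e2, e3]
  · have h1 : pB ≫ iB = 𝟙 X - pA ≫ iA := by
      rw [← e5]; abel
    rw [Category.assoc, ← Category.assoc pB, h1]
    simp [Preadditive.sub_comp, Preadditive.comp_sub, f2, f3]

end DecompLemmas

end CYPaper

namespace CYPaper

set_option linter.unusedSectionVars false
set_option maxHeartbeats 1000000

variable {k : Type u} [Field k]
variable {C : Type u} [Category.{v} C] [Preadditive C] [Linear k C]
  [HasZeroObject C] [HasShift C ℤ] [∀ n : ℤ, (shiftFunctor C n).Additive]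
  [Pretriangulated C]

section Exists

variable [∀ X Y : C, FiniteDimensional k (X ⟶ Y)]

lemma finrank_add_le {X A B : C} (h : IsDecomp X A B) :
    Module.finrank k (A ⟶ A) + Module.finrank k (B ⟶ B)
      ≤ Module.finrank k (X ⟶ X) := by
  obtain ⟨iA, iB, pA, pB, e1, e2, e3, e4, e5⟩ := h
  let Ψ : ((A ⟶ A) × (B ⟶ B)) →ₗ[k] (X ⟶ X) :=
    { toFun := fun fg => pA ≫ fg.1 ≫ iA + pB ≫ fg.2 ≫ iB
      map_add' := by
        intro x y
        simp only [Prod.fst_add, Prod.snd_add, Preadditive.comp_add,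
          Preadditive.add_comp]
        abel
      map_smul' := by
        intro c x
        simp only [Prod.smul_fst, Prod.smul_snd, CategoryTheory.Linear.comp_smul,
          CategoryTheory.Linear.smul_comp, RingHom.id_apply, smul_add] }
  have key : ∀ z : ((A ⟶ A) × (B ⟶ B)),
      (iA ≫ Ψ z ≫ pA = z.1) ∧ (iB ≫ Ψ z ≫ pB = z.2) := by
    intro z
    constructor
    · show iA ≫ (pA ≫ z.1 ≫ iA + pB ≫ z.2 ≫ iB) ≫ pA = z.1
      rw [Preadditive.add_comp, Preadditive.comp_add]
      simp [reassoc_of% e1, reassoc_of% e3, e1, e3, e4]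
    · show iB ≫ (pA ≫ z.1 ≫ iA + pB ≫ z.2 ≫ iB) ≫ pB = z.2
      rw [Preadditive.add_comp, Preadditive.comp_add]
      simp [reassoc_of% e2, reassoc_of% e4, e2, e3, e4]
  have hinj : Function.Injective Ψ := by
    intro x y hxy
    have h1 := (key x).1
    have h2 := (key x).2
    rw [hxy] at h1 h2
    rw [(key y).1] at h1
    rw [(key y).2] at h2
    exact Prod.ext h1.symm h2.symm
  have := LinearMap.finrank_le_finrank_of_injective hinj
  rwa [Module.finrank_prod] at this

lemma not_indec_decomp {X : C} (hnz : ¬ IsZero X) (hni : ¬ Indec X) :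
    ∃ A B : C, IsDecomp X A B ∧ ¬ IsZero A ∧ ¬ IsZero B := by
  rw [Indec] at hni
  push_neg at hni
  obtain ⟨A, B, hd, h1, h2⟩ := hni hnz
  exact ⟨A, B, hd, h1, h2⟩

lemma finrank_end_pos {X : C} (hnz : ¬ IsZero X) :
    0 < Module.finrank k (X ⟶ X) := by
  have : Nontrivial (X ⟶ X) := ⟨⟨𝟙 X, 0, not_isZero_id_ne hnz⟩⟩
  exact Module.finrank_pos

lemma exists_dsd_aux : ∀ (n : ℕ) (X : C), Module.finrank k (X ⟶ X) ≤ n →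
    ¬ IsZero X → ∃ (ι : Type) (_ : Fintype ι) (Xs : ι → C),
      Nonempty ι ∧ (∀ i, Indec (Xs i)) ∧ DSD X Xs := by
  intro n
  induction n with
  | zero =>
    intro X hle hnz
    have := finrank_end_pos (k := k) hnz
    omega
  | succ n ih =>
    intro X hle hnz
    by_cases hi : Indec X
    · refine ⟨PUnit, inferInstance, fun _ => X, ⟨⟨⟩⟩, fun _ => hi, ?_⟩
      exact ⟨fun _ => 𝟙 X, fun _ => 𝟙 X, fun _ => by simp, fun j j' hne =>
        absurd rfl hne, by simp⟩
    · obtain ⟨A, B, hd, hA, hB⟩ := not_indec_decomp hnz hi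
      have hsum := finrank_add_le (k := k) hd
      have hApos := finrank_end_pos (k := k) hA
      have hBpos := finrank_end_pos (k := k) hB
      obtain ⟨ιA, _, As, hneA, hindA, hdsdA⟩ :=
        ih A (by omega) hA
      obtain ⟨ιB, _, Bs, hneB, hindB, hdsdB⟩ :=
        ih B (by omega) hB
      refine ⟨ιA ⊕ ιB, inferInstance, Sum.elim As Bs, ⟨Sum.inl hneA.some⟩, ?_, ?_⟩
      · rintro (a | b)
        · exact hindA a
        · exact hindB b
      · exact dsd_sum hd hdsdA hdsdB

end Exists

section Exchange

lemma smd_exchange (hKS : KrullSchmidt C) {ι : Type} [Fintype ι] {A : C}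
    {As : ι → C} (hA : DSD A As) (hind : ∀ i, Indec (As i)) {N : C}
    (hN : Indec N) (h : Smd N A) : ∃ i, Nonempty (N ≅ As i) := by
  obtain ⟨ii, pp, h1, h2, h3⟩ := hA
  obtain ⟨s, t, hst⟩ := h
  have hsum : (∑ j, s ≫ pp j ≫ ii j ≫ t) = 𝟙 N := by
    have heq : (∑ j, s ≫ pp j ≫ ii j ≫ t) = s ≫ (∑ j, pp j ≫ ii j) ≫ t := by
      rw [Preadditive.sum_comp, Preadditive.comp_sum]
      exact Finset.sum_congr rfl fun j _ => by simp [Category.assoc]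
    rw [heq, h3, Category.id_comp, hst]
  obtain ⟨j, g, hg1, hg2⟩ := exists_inv_of_sum_eq_id (hKS N hN)
    (fun j => s ≫ pp j ≫ ii j ≫ t) hsum
  set w : N ⟶ As j := s ≫ pp j with hw
  set v : As j ⟶ N := ii j ≫ t ≫ g with hv
  have hwv : w ≫ v = 𝟙 N := by
    rw [hw, hv]
    have : (s ≫ pp j) ≫ ii j ≫ t ≫ g = (s ≫ pp j ≫ ii j ≫ t) ≫ g := by
      simp [Category.assoc]
    rw [this, hg1]
  have hvw_idem : (v ≫ w) ≫ (v ≫ w) = v ≫ w := by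
    rw [Category.assoc, ← Category.assoc w, hwv, Category.id_comp]
  rcases idem_comp_eq (hKS (As j) (hind j)) hvw_idem with h0 | h1'
  · exfalso
    apply not_isZero_id_ne hN.1
    calc 𝟙 N = (w ≫ v) ≫ (w ≫ v) := by rw [hwv, Category.id_comp]
    _ = w ≫ (v ≫ w) ≫ v := by simp [Category.assoc]
    _ = 0 := by rw [h0, Limits.zero_comp, Limits.comp_zero]
  · exact ⟨j, ⟨⟨w, v, hwv, h1'⟩⟩⟩

end Exchange

section KSU

lemma dsd_isZero {X : C} {ι : Type} [Fintype ι] [IsEmpty ι] {Xs : ι → C}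
    (h : DSD X Xs) : IsZero X := by
  obtain ⟨i, p, h1, h2, h3⟩ := h
  apply isZero_of_id_zero
  rw [← h3, Finset.univ_eq_empty, Finset.sum_empty]

lemma my_sum_split {ι : Type} [Fintype ι] [DecidableEq ι] {M : Type*}
    [AddCommMonoid M] (f : ι → M) (a : ι) [F : Fintype {i : ι // ¬ i = a}] :
    f a + (∑ i : {i : ι // ¬ i = a}, f i.1) = ∑ i, f i := by
  have h1 : (∑ i ∈ Finset.univ.erase a, f i) = ∑ i : {i : ι // ¬ i = a}, f i.1 :=
    Finset.sum_subtype _ (fun x => by simp [Finset.mem_erase]) f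
  rw [← h1]
  exact Finset.add_sum_erase _ f (Finset.mem_univ a)

lemma ksu (hKS : KrullSchmidt C) : ∀ (n : ℕ) {ι κ : Type} [Fintype ι] [Fintype κ],
    Fintype.card ι ≤ n → ∀ (X : C) (Xs : ι → C) (Ys : κ → C), DSD X Xs →
    DSD X Ys → (∀ i, Indec (Xs i)) → (∀ m, Indec (Ys m)) →
    ∃ σ : ι ≃ κ, ∀ i, Nonempty (Xs i ≅ Ys (σ i)) := by
  intro n
  induction n with
  | zero =>
    intro ι κ _ _ hcard X Xs Ys hX hY hiX hiY
    haveI : IsEmpty ι := Fintype.card_eq_zero_iff.mp (Nat.le_zero.mp hcard)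
    have hXz : IsZero X := dsd_isZero hX
    haveI : IsEmpty κ := by
      by_contra hne
      rw [not_isEmpty_iff] at hne
      obtain ⟨m⟩ := hne
      exact (hiY m).1 ((hY.smd m).isZero hXz)
    exact ⟨Equiv.equivOfIsEmpty ι κ, fun i => isEmptyElim i⟩
  | succ n ih =>
    intro ι κ _ _ hcard X Xs Ys hX hY hiX hiY
    by_cases hc : IsEmpty ι
    · haveI := hc
      have hXz : IsZero X := dsd_isZero hX
      haveI : IsEmpty κ := by
        by_contra hne
        rw [not_isEmpty_iff] at hne
        obtain ⟨m⟩ := hne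
        exact (hiY m).1 ((hY.smd m).isZero hXz)
      exact ⟨Equiv.equivOfIsEmpty ι κ, fun i => isEmptyElim i⟩
    rw [not_isEmpty_iff] at hc
    obtain ⟨i₀⟩ := hc
    classical
    obtain ⟨ii, pp, x1, x2, x3⟩ := hX
    obtain ⟨jj, qq, y1, y2, y3⟩ := hY
    set N := Xs i₀ with hN
    -- find l with invertible component
    have hsum : (∑ m, ii i₀ ≫ qq m ≫ jj m ≫ pp i₀) = 𝟙 N := by
      have heq : (∑ m, ii i₀ ≫ qq m ≫ jj m ≫ pp i₀)
          = ii i₀ ≫ (∑ m, qq m ≫ jj m) ≫ pp i₀ := by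
        rw [Preadditive.sum_comp, Preadditive.comp_sum]
        exact Finset.sum_congr rfl fun m _ => by simp [Category.assoc]
      rw [heq, y3, Category.id_comp, x1]
    obtain ⟨l, g, hg1, hg2⟩ := exists_inv_of_sum_eq_id (hKS N (hiX i₀))
      (fun m => ii i₀ ≫ qq m ≫ jj m ≫ pp i₀) hsum
    set w : N ⟶ Ys l := ii i₀ ≫ qq l with hw
    set v : Ys l ⟶ N := jj l ≫ pp i₀ ≫ g with hv
    have hwv : w ≫ v = 𝟙 N := by
      rw [hw, hv]
      have : (ii i₀ ≫ qq l) ≫ jj l ≫ pp i₀ ≫ g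
          = (ii i₀ ≫ qq l ≫ jj l ≫ pp i₀) ≫ g := by simp [Category.assoc]
      rw [this, hg1]
    have hvw : v ≫ w = 𝟙 (Ys l) := by
      have hidem : (v ≫ w) ≫ (v ≫ w) = v ≫ w := by
        rw [Category.assoc, ← Category.assoc w, hwv, Category.id_comp]
      rcases idem_comp_eq (hKS (Ys l) (hiY l)) hidem with h0 | h1'
      · exfalso
        apply not_isZero_id_ne (hiX i₀).1
        calc 𝟙 N = (w ≫ v) ≫ (w ≫ v) := by rw [hwv, Category.id_comp]
        _ = w ≫ (v ≫ w) ≫ v := by simp [Category.assoc]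
        _ = 0 := by rw [h0, Limits.zero_comp, Limits.comp_zero]
      · exact h1'
    have hNYl : Nonempty (N ≅ Ys l) := ⟨⟨w, v, hwv, hvw⟩⟩
    -- exchange decomposition
    set p0 : X ⟶ N := qq l ≫ v with hp0
    have hip0 : ii i₀ ≫ p0 = 𝟙 N := by
      rw [hp0, ← Category.assoc, ← hw, hwv]
    set e : X ⟶ X := p0 ≫ ii i₀ with he
    have hee : e ≫ e = e := by
      rw [he, Category.assoc, ← Category.assoc (ii i₀), hip0, Category.id_comp]
    have hjl_p0 : jj l ≫ p0 = v := by
      rw [hp0, ← Category.assoc, y1, Category.id_comp]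
    have hjm_p0 : ∀ m, ¬ m = l → jj m ≫ p0 = 0 := by
      intro m hm
      rw [hp0, ← Category.assoc, y2 m l hm, Limits.zero_comp]
    have hjm_e : ∀ m, ¬ m = l → jj m ≫ e = 0 := by
      intro m hm
      rw [he, ← Category.assoc, hjm_p0 m hm, Limits.zero_comp]
    have heeY : e ≫ qq l ≫ jj l = qq l ≫ jj l := by
      rw [he]
      calc (p0 ≫ ii i₀) ≫ qq l ≫ jj l = p0 ≫ (ii i₀ ≫ qq l) ≫ jj l := by
            simp [Category.assoc]
      _ = (qq l ≫ v) ≫ w ≫ jj l := by rw [hp0, hw, Category.assoc]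
      _ = qq l ≫ (v ≫ w) ≫ jj l := by simp [Category.assoc]
      _ = qq l ≫ jj l := by rw [hvw, Category.id_comp]
    -- the two complements
    set R : C := ⨁ (fun m : {m : κ // ¬ m = l} => Ys m.1) with hR
    set RX : C := ⨁ (fun i : {i : ι // ¬ i = i₀} => Xs i.1) with hRX
    -- decomposition X = N ⊕ RX (from the Xs decomposition)
    have hsplitX : (∑ i : {i : ι // ¬ i = i₀}, pp i.1 ≫ ii i.1)
        = 𝟙 X - pp i₀ ≫ ii i₀ := by
      have := my_sum_split (fun j => pp j ≫ ii j) i₀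
      rw [x3] at this
      rw [← this]
      abel
    have hsplitY : (∑ m : {m : κ // ¬ m = l}, qq m.1 ≫ jj m.1)
        = 𝟙 X - qq l ≫ jj l := by
      have := my_sum_split (fun m => qq m ≫ jj m) l
      rw [y3] at this
      rw [← this]
      abel
    -- IsDecomp X N RX
    have hdX : ∃ (iB : RX ⟶ X) (pB : X ⟶ RX),
        iB ≫ pB = 𝟙 RX ∧ ii i₀ ≫ pB = 0 ∧ iB ≫ pp i₀ = 0 ∧
        pp i₀ ≫ ii i₀ + pB ≫ iB = 𝟙 X := by
      refine ⟨biproduct.desc (fun i => ii i.1), biproduct.lift (fun i => pp i.1),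
        ?_, ?_, ?_, ?_⟩
      · apply biproduct.hom_ext'
        intro a
        rw [biproduct.ι_desc_assoc, Category.comp_id]
        apply biproduct.hom_ext
        intro a'
        rw [Category.assoc, biproduct.lift_π]
        by_cases haa : a = a'
        · subst haa; rw [x1, biproduct.ι_π_self]
        · rw [x2 a.1 a'.1 (fun hh => haa (Subtype.ext hh)), biproduct.ι_π_ne _ haa]
      · apply biproduct.hom_ext
        intro a
        rw [Category.assoc, biproduct.lift_π, Limits.zero_comp]
        exact x2 i₀ a.1 (fun hh => a.2 hh.symm)
      · apply biproduct.hom_ext'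
        intro a
        rw [biproduct.ι_desc_assoc, Limits.comp_zero]
        exact x2 a.1 i₀ a.2
      · rw [biproduct.lift_desc, hsplitX]
        abel
    obtain ⟨iBX, pBX, d1, d2, d3, d4⟩ := hdX
    -- IsDecomp X N R (exchanged)
    have hiie : ii i₀ ≫ (𝟙 X - e) = 0 := by
      have : ii i₀ ≫ e = ii i₀ := by
        rw [he, ← Category.assoc, hip0, Category.id_comp]
      rw [Preadditive.comp_sub, Category.comp_id, this, sub_self]
    have hdY : ∃ (iB : R ⟶ X) (pB : X ⟶ R),
        iB ≫ pB = 𝟙 R ∧ ii i₀ ≫ pB = 0 ∧ iB ≫ p0 = 0 ∧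
        p0 ≫ ii i₀ + pB ≫ iB = 𝟙 X := by
      refine ⟨biproduct.desc (fun m => jj m.1),
        (𝟙 X - e) ≫ biproduct.lift (fun m => qq m.1), ?_, ?_, ?_, ?_⟩
      · apply biproduct.hom_ext'
        intro m
        rw [biproduct.ι_desc_assoc, Category.comp_id]
        have hme : jj m.1 ≫ (𝟙 X - e) = jj m.1 := by
          rw [Preadditive.comp_sub, hjm_e m.1 m.2, sub_zero, Category.comp_id]
        rw [← Category.assoc, hme]
        apply biproduct.hom_ext
        intro m'
        rw [Category.assoc, biproduct.lift_π]
        by_cases hmm' : m = m'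
        · subst hmm'; rw [y1, biproduct.ι_π_self]
        · rw [y2 m.1 m'.1 (fun hh => hmm' (Subtype.ext hh)), biproduct.ι_π_ne _ hmm']
      · rw [← Category.assoc, hiie, Limits.zero_comp]
      · apply biproduct.hom_ext'
        intro m
        rw [biproduct.ι_desc_assoc, Limits.comp_zero]
        exact hjm_p0 m.1 m.2
      · have hld : biproduct.lift (fun m : {m : κ // ¬ m = l} => qq m.1) ≫
            biproduct.desc (fun m => jj m.1) = 𝟙 X - qq l ≫ jj l := by
          rw [biproduct.lift_desc, hsplitY]
        have : ((𝟙 X - e) ≫ biproduct.lift (fun m : {m : κ // ¬ m = l} => qq m.1))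
            ≫ biproduct.desc (fun m => jj m.1) = (𝟙 X - e) ≫ (𝟙 X - qq l ≫ jj l) := by
          rw [Category.assoc, hld]
        rw [this]
        have hexp : (𝟙 X - e) ≫ (𝟙 X - qq l ≫ jj l) = 𝟙 X - e := by
          rw [Preadditive.sub_comp, Preadditive.comp_sub, Preadditive.comp_sub,
            Category.id_comp, Category.id_comp, Category.comp_id, heeY]
          abel
        rw [hexp, he]
        abel
    obtain ⟨iBY, pBY, c1, c2, c3, c4⟩ := hdY
    obtain ⟨eiso⟩ := complement_iso (ii i₀) iBX (pp i₀) pBX iBY p0 pBY d1 d2 d4 c1 c2 c4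
    -- apply the induction hypothesis to the complements
    have hcard' : Fintype.card {i : ι // ¬ i = i₀} ≤ n := by
      have hlt : Fintype.card {i : ι // ¬ i = i₀} < Fintype.card ι :=
        Fintype.card_subtype_lt (x := i₀) (by simp)
      omega
    have dsdRX : DSD RX (fun i : {i : ι // ¬ i = i₀} => Xs i.1) := dsd_biproduct _
    have dsdRY : DSD RX (fun m : {m : κ // ¬ m = l} => Ys m.1) :=
      DSD.of_iso eiso.symm (dsd_biproduct _)
    obtain ⟨σ', hσ'⟩ := ih hcard' RX _ _ dsdRX dsdRY
      (fun i => hiX i.1) (fun m => hiY m.1)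
    let eS : {i : ι // i = i₀} ≃ {m : κ // m = l} :=
      ⟨fun _ => ⟨l, rfl⟩, fun _ => ⟨i₀, rfl⟩,
        fun x => Subtype.ext x.2.symm, fun x => Subtype.ext x.2.symm⟩
    refine ⟨(Equiv.sumCompl (fun i => i = i₀)).symm.trans
      ((eS.sumCongr σ').trans (Equiv.sumCompl (fun m => m = l))), ?_⟩
    intro i
    by_cases hi : i = i₀
    · subst hi
      have hcomp : (Equiv.sumCompl (fun i' => i' = i)).symm i = Sum.inl ⟨i, rfl⟩ :=
        Equiv.sumCompl_symm_apply_of_pos (p := fun i' => i' = i) (a := i) rfl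
      simp only [Equiv.trans_apply, hcomp, Equiv.sumCongr_apply, Sum.map_inl,
        Equiv.sumCompl_apply_inl]
      exact hNYl
    · have hcomp : (Equiv.sumCompl (fun i' => i' = i₀)).symm i = Sum.inr ⟨i, hi⟩ :=
        Equiv.sumCompl_symm_apply_of_neg (p := fun i' => i' = i₀) (a := i) hi
      simp only [Equiv.trans_apply, hcomp, Equiv.sumCongr_apply, Sum.map_inr,
        Equiv.sumCompl_apply_inr]
      exact hσ' ⟨i, hi⟩

end KSU

end CYPaper

namespace CYPaper

set_option linter.unusedSectionVars false
set_option maxHeartbeats 1000000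

variable {k : Type u} [Field k]
variable {C : Type u} [Category.{v} C] [Preadditive C] [Linear k C]
  [HasZeroObject C] [HasShift C ℤ] [∀ n : ℤ, (shiftFunctor C n).Additive]
  [Pretriangulated C]

section GFunctor

/-- `G` as a functor. -/
def Gfun (S : Serre k C) (d : ℤ) : C ⥤ C := S.F ⋙ shiftFunctor C (-d)

variable (S : Serre k C) (d : ℤ)

lemma Gfun_obj (X : C) : (Gfun S d).obj X = Gobj S d X := rfl

lemma gfun_additive : (Gfun S d).Additive := by
  haveI := S.additive
  show (S.F ⋙ shiftFunctor C (-d)).Additive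
  infer_instance

lemma gfun_isEquivalence : (Gfun S d).IsEquivalence := by
  haveI := S.isEquiv
  show (S.F ⋙ shiftFunctor C (-d)).IsEquivalence
  infer_instance

/-- Iterates of `G` applied to an isomorphism. -/
def GpowIso : ∀ (n : ℕ) {X Y : C}, (X ≅ Y) → (Gpow S d n X ≅ Gpow S d n Y)
  | 0, _, _, e => e
  | n + 1, _, _, e => (Gfun S d).mapIso (GpowIso n e)

lemma Gpow_add (a b : ℕ) (X : C) :
    Gpow S d (a + b) X = Gpow S d a (Gpow S d b X) := by
  induction a with
  | zero => rw [Nat.zero_add]; rfl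
  | succ a ih =>
    have h : (a + 1) + b = (a + b) + 1 := Nat.succ_add a b
    rw [h]
    show Gobj S d (Gpow S d (a + b) X) = Gobj S d (Gpow S d a (Gpow S d b X))
    rw [ih]

lemma gobj_cancel {X Y : C} (h : Gobj S d X ≅ Gobj S d Y) : Nonempty (X ≅ Y) := by
  haveI := gfun_isEquivalence S d
  let E := (Gfun S d).asEquivalence
  have h' : E.functor.obj X ≅ E.functor.obj Y := h
  exact ⟨E.unitIso.app X ≪≫ E.inverse.mapIso h' ≪≫ (E.unitIso.app Y).symm⟩

lemma gpow_cancel (n : ℕ) {X Y : C} (h : Nonempty (Gpow S d n X ≅ Gpow S d n Y)) :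
    Nonempty (X ≅ Y) := by
  induction n with
  | zero => exact h
  | succ n ih =>
    obtain ⟨h'⟩ := h
    exact ih (gobj_cancel S d h')

lemma gobj_isZero_iff (X : C) : IsZero (Gobj S d X) ↔ IsZero X := by
  haveI := gfun_isEquivalence S d
  haveI hadd : (Gfun S d).Additive := gfun_additive S d
  let E := (Gfun S d).asEquivalence
  haveI : E.functor.Additive := hadd
  constructor
  · intro h
    have h2 : IsZero (E.inverse.obj (E.functor.obj X)) :=
      E.inverse.map_isZero h
    exact h2.of_iso (E.unitIso.app X)
  · intro h
    exact (Gfun S d).map_isZero h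

lemma indec_gobj {X : C} (h : Indec X) : Indec (Gobj S d X) := by
  haveI := gfun_isEquivalence S d
  haveI hadd : (Gfun S d).Additive := gfun_additive S d
  let E := (Gfun S d).asEquivalence
  haveI : E.functor.Additive := hadd
  constructor
  · rw [gobj_isZero_iff]
    exact h.1
  · intro A B hd
    have hd2 : IsDecomp (E.inverse.obj (Gobj S d X)) (E.inverse.obj A)
        (E.inverse.obj B) := hd.map E.inverse
    have hd3 : IsDecomp X (E.inverse.obj A) (E.inverse.obj B) :=
      hd2.of_iso (E.unitIso.app X).symm
    rcases h.2 _ _ hd3 with hz | hz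
    · exact Or.inl (by
        have h2 : IsZero (E.functor.obj (E.inverse.obj A)) := E.functor.map_isZero hz
        exact h2.of_iso (E.counitIso.app A).symm)
    · exact Or.inr (by
        have h2 : IsZero (E.functor.obj (E.inverse.obj B)) := E.functor.map_isZero hz
        exact h2.of_iso (E.counitIso.app B).symm)

lemma indec_gpow (n : ℕ) {X : C} (h : Indec X) : Indec (Gpow S d n X) := by
  induction n with
  | zero => exact h
  | succ n ih => exact indec_gobj S d ih

end GFunctor

section Orbit

variable (S : Serre k C) (d : ℤ) {M : C}

lemma oG_mem (hf : FiniteGOrbit S d M) :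
    0 < oG S d M ∧ Nonempty (Gpow S d (oG S d M) M ≅ M) :=
  Nat.sInf_mem hf

lemma gpow_mul_self (hf : FiniteGOrbit S d M) (c : ℕ) :
    Nonempty (Gpow S d (c * oG S d M) M ≅ M) := by
  obtain ⟨hrpos, ⟨hr⟩⟩ := oG_mem S d hf
  induction c with
  | zero => rw [Nat.zero_mul]; exact ⟨Iso.refl M⟩
  | succ c ih =>
    obtain ⟨ihc⟩ := ih
    have h : (c + 1) * oG S d M = c * oG S d M + oG S d M := by ring
    rw [h, Gpow_add]
    exact ⟨GpowIso S d (c * oG S d M) hr ≪≫ ihc⟩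

lemma gpow_mod (hf : FiniteGOrbit S d M) (n : ℕ) :
    Nonempty (Gpow S d n M ≅ Gpow S d (n % oG S d M) M) := by
  set r := oG S d M with hrdef
  obtain ⟨hmul⟩ := gpow_mul_self S d hf (n / r)
  have h : n = n % r + (n / r) * r := by
    rw [Nat.mul_comm]
    exact (Nat.mod_add_div n r).symm
  refine ⟨?_⟩
  calc Gpow S d n M = Gpow S d (n % r + (n / r) * r) M := by rw [← h]
  _ = Gpow S d (n % r) (Gpow S d ((n / r) * r) M) := Gpow_add S d _ _ M
  _ ≅ Gpow S d (n % r) M := GpowIso S d _ hmul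

lemma gpow_orbit_ne (hf : FiniteGOrbit S d M) {i j : ℕ} (hij : i < j)
    (hj : j < oG S d M) : ¬ Nonempty (Gpow S d i M ≅ Gpow S d j M) := by
  rintro ⟨h⟩
  have h1 : Gpow S d j M = Gpow S d i (Gpow S d (j - i) M) := by
    rw [← Gpow_add]
    congr 1
    omega
  rw [h1] at h
  obtain ⟨h2⟩ := gpow_cancel S d i ⟨h⟩
  have hmem : (j - i) ∈ {r : ℕ | 0 < r ∧ Nonempty (Gpow S d r M ≅ M)} :=
    ⟨by omega, ⟨h2.symm⟩⟩
  have := Nat.sInf_le hmem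
  have : oG S d M ≤ j - i := this
  omega

lemma same_orbit_rev (hf : FiniteGOrbit S d M) {M' : C} (j : ℕ)
    (h : Nonempty (Gpow S d j M ≅ M')) : ∃ m : ℕ, Nonempty (Gpow S d m M' ≅ M) := by
  obtain ⟨hiso⟩ := h
  obtain ⟨hrpos, _⟩ := oG_mem S d hf
  set r := oG S d M with hrdef
  obtain ⟨hmul⟩ := gpow_mul_self S d hf (j + 1)
  refine ⟨(j + 1) * r - j, ⟨?_⟩⟩
  have harith : (j + 1) * r - j + j = (j + 1) * r := by
    have : j + 1 ≤ (j + 1) * r := Nat.le_mul_of_pos_right _ hrpos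
    omega
  calc Gpow S d ((j + 1) * r - j) M'
      ≅ Gpow S d ((j + 1) * r - j) (Gpow S d j M) :=
        GpowIso S d _ hiso.symm
  _ = Gpow S d ((j + 1) * r) M := by rw [← Gpow_add, harith]
  _ ≅ M := hmul

lemma oG_le_of_same (hf : FiniteGOrbit S d M) {M' : C}
    (hsame : SameGOrbit S d M M') :
    FiniteGOrbit S d M' ∧ oG S d M' ≤ oG S d M := by
  obtain ⟨j, ⟨hj⟩⟩ := hsame
  obtain ⟨hrpos, ⟨hr⟩⟩ := oG_mem S d hf
  set r := oG S d M with hrdef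
  have key : Nonempty (Gpow S d r M' ≅ M') := by
    refine ⟨?_⟩
    calc Gpow S d r M' ≅ Gpow S d r (Gpow S d j M) := GpowIso S d r hj.symm
    _ = Gpow S d (r + j) M := (Gpow_add S d r j M).symm
    _ = Gpow S d (j + r) M := by rw [Nat.add_comm]
    _ = Gpow S d j (Gpow S d r M) := Gpow_add S d j r M
    _ ≅ Gpow S d j M := GpowIso S d j hr
    _ ≅ M' := hj
  have hmem : r ∈ {t : ℕ | 0 < t ∧ Nonempty (Gpow S d t M' ≅ M')} := ⟨hrpos, key⟩
  exact ⟨⟨r, hrpos, key⟩, Nat.sInf_le hmem⟩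

lemma same_orbit_symm (hf : FiniteGOrbit S d M) {M' : C}
    (hsame : SameGOrbit S d M M') : SameGOrbit S d M' M := by
  obtain ⟨j, hj⟩ := hsame
  obtain ⟨m, hm⟩ := same_orbit_rev S d hf j hj
  exact ⟨m, hm⟩

lemma oG_eq_of_same (hf : FiniteGOrbit S d M) {M' : C}
    (hsame : SameGOrbit S d M M') : oG S d M' = oG S d M := by
  obtain ⟨hf', hle⟩ := oG_le_of_same S d hf hsame
  obtain ⟨_, hle'⟩ := oG_le_of_same S d hf' (same_orbit_symm S d hf hsame)
  omega

end Orbit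

end CYPaper

namespace CYPaper

set_option linter.unusedSectionVars false
set_option maxHeartbeats 1000000

variable {k : Type u} [Field k]
variable {C : Type u} [Category.{v} C] [Preadditive C] [Linear k C]
  [HasZeroObject C] [HasShift C ℤ] [∀ n : ℤ, (shiftFunctor C n).Additive]
  [Pretriangulated C]

section CY

variable (S : Serre k C) (d : ℤ)

/-- The canonical iso `(G X)⟦d⟧ ≅ F X`. -/
noncomputable def alphaIso (X : C) : ((Gobj S d X)⟦d⟧ : C) ≅ S.F.obj X :=
  (shiftFunctorCompIsoId C (-d) d (neg_add_cancel d)).app (S.F.obj X)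

/-- The Serre-duality equivalence `Hom(X,Z) ≅ D Hom(Z, (G X)⟦d⟧)`. -/
noncomputable def eta1 (X Z : C) :
    (X ⟶ Z) ≃ₗ[k] Module.Dual k (Z ⟶ (Gobj S d X)⟦d⟧) :=
  (S.η X Z).trans (LinearEquiv.dualMap
    (Linear.homCongr k (Iso.refl Z) (alphaIso S d X)))

lemma eta1_apply (X Z : C) (u : X ⟶ Z) (w : Z ⟶ (Gobj S d X)⟦d⟧) :
    eta1 S d X Z u w = S.η X Z u (w ≫ (alphaIso S d X).hom) := by
  simp [eta1, LinearEquiv.dualMap_apply, Linear.homCongr_apply]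

lemma eta1_nat (X : C) {Z W : C} (f : Z ⟶ W) (u : X ⟶ Z)
    (w : W ⟶ (Gobj S d X)⟦d⟧) :
    eta1 S d X W (u ≫ f) w = eta1 S d X Z u (f ≫ w) := by
  rw [eta1_apply, eta1_apply, S.nat_right f u (w ≫ (alphaIso S d X).hom),
    Category.assoc]

variable [∀ X Y : C, FiniteDimensional k (X ⟶ Y)]

lemma hom_ext_of_duals {V W : C} {a b : V ⟶ W}
    (h : ∀ φ : Module.Dual k (V ⟶ W), φ a = φ b) : a = b := by
  apply (Module.evalEquiv k (V ⟶ W)).injective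
  apply LinearMap.ext
  intro φ
  simpa [Module.evalEquiv_apply, Module.Dual.eval_apply] using h φ

lemma cy_of_giso (X : C) (hnz : ¬ IsZero X) (h : Nonempty (Gobj S d X ≅ X)) :
    IsCYObj k C d X := by
  obtain ⟨c⟩ := h
  refine ⟨hnz, ?_⟩
  set γ : ((X⟦d⟧ : C) ≅ (Gobj S d X)⟦d⟧) := ((shiftFunctor C d).mapIso c).symm with hγ
  refine ⟨fun Z => (eta1 S d X Z).trans (LinearEquiv.dualMap
    (Linear.homCongr k (Iso.refl Z) γ)), ?_⟩
  intro Z W f u w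
  simp only [LinearEquiv.trans_apply, LinearEquiv.dualMap_apply, Linear.homCongr_apply,
    Iso.refl_inv, Category.id_comp]
  rw [eta1_nat S d X f u (w ≫ γ.hom), Category.assoc]

lemma giso_of_cy (X : C) (hcy : IsCYObj k C d X) :
    Nonempty ((Gobj S d X : C) ≅ X) := by
  obtain ⟨hnz, η2, hnat⟩ := hcy
  classical
  -- the natural iso of dual functors
  set θ : ∀ Z : C, Module.Dual k (Z ⟶ (Gobj S d X)⟦d⟧) ≃ₗ[k]
      Module.Dual k (Z ⟶ (X⟦d⟧ : C)) :=
    fun Z => (eta1 S d X Z).symm.trans (η2 Z) with hθdef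
  have hθnat : ∀ {Z W : C} (f : Z ⟶ W) (φ : Module.Dual k (Z ⟶ (Gobj S d X)⟦d⟧)),
      θ W (φ.comp (Linear.leftComp k _ f)) = (θ Z φ).comp (Linear.leftComp k _ f) := by
    intro Z W f φ
    set u : X ⟶ Z := (eta1 S d X Z).symm φ with hu
    have hφ : φ = eta1 S d X Z u := by rw [hu, LinearEquiv.apply_symm_apply]
    have h1 : φ.comp (Linear.leftComp k _ f) = eta1 S d X W (u ≫ f) := by
      apply LinearMap.ext
      intro w
      simp only [LinearMap.comp_apply, Linear.leftComp_apply]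
      rw [hφ, ← eta1_nat S d X f u w]
    rw [h1]
    have h2 : θ W (eta1 S d X W (u ≫ f)) = η2 W (u ≫ f) := by
      simp [hθdef, LinearEquiv.symm_apply_apply]
    rw [h2]
    have h3 : θ Z φ = η2 Z u := by
      simp [hθdef, hφ, LinearEquiv.symm_apply_apply]
    rw [h3]
    apply LinearMap.ext
    intro w
    simp only [LinearMap.comp_apply, Linear.leftComp_apply]
    exact hnat f u w
  -- dualize back
  set ψ : ∀ Z : C, ((Z ⟶ (Gobj S d X)⟦d⟧) ≃ₗ[k] (Z ⟶ (X⟦d⟧ : C))) :=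
    fun Z => (Module.evalEquiv k _).trans (((θ Z).symm.dualMap).trans
      (Module.evalEquiv k _).symm) with hψdef
  have hψ : ∀ (Z : C) (w : Z ⟶ (Gobj S d X)⟦d⟧)
      (φ' : Module.Dual k (Z ⟶ (X⟦d⟧ : C))),
      φ' (ψ Z w) = (θ Z).symm φ' w := by
    intro Z w φ'
    have h1 : Module.evalEquiv k _ (ψ Z w) = (θ Z).symm.dualMap
        (Module.evalEquiv k _ w) := by
      simp [hψdef]
    have h2 := congrArg (fun t => t φ') h1
    simpa [Module.evalEquiv_apply, Module.Dual.eval_apply,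
      LinearEquiv.dualMap_apply] using h2
  have hψnat : ∀ {Z W : C} (f : Z ⟶ W) (w : W ⟶ (Gobj S d X)⟦d⟧),
      ψ Z (f ≫ w) = f ≫ ψ W w := by
    intro Z W f w
    apply hom_ext_of_duals (k := k)
    intro φ'
    rw [hψ]
    have hsymnat : (θ W).symm (φ'.comp (Linear.leftComp k _ f))
        = ((θ Z).symm φ').comp (Linear.leftComp k _ f) := by
      have := hθnat f ((θ Z).symm φ')
      rw [LinearEquiv.apply_symm_apply] at this
      rw [← this, LinearEquiv.symm_apply_apply]
    have hR : φ' (f ≫ ψ W w) = (θ W).symm (φ'.comp (Linear.leftComp k _ f)) w := by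
      have h0 := hψ W w (φ'.comp (Linear.leftComp k _ f))
      rw [← h0]
      simp [LinearMap.comp_apply, Linear.leftComp_apply]
    rw [hR, hsymnat]
    simp [LinearMap.comp_apply, Linear.leftComp_apply]
  -- Yoneda
  set b : ((Gobj S d X)⟦d⟧ : C) ⟶ (X⟦d⟧ : C) := ψ _ (𝟙 _) with hb
  have hψb : ∀ (Z : C) (w : Z ⟶ (Gobj S d X)⟦d⟧), ψ Z w = w ≫ b := by
    intro Z w
    have := hψnat w (𝟙 _)
    rw [Category.comp_id] at this
    exact this
  have hψsymnat : ∀ {Z W : C} (f : Z ⟶ W) (w' : W ⟶ (X⟦d⟧ : C)),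
      (ψ Z).symm (f ≫ w') = f ≫ (ψ W).symm w' := by
    intro Z W f w'
    have h1 : ψ Z (f ≫ (ψ W).symm w') = f ≫ w' := by
      rw [hψnat, LinearEquiv.apply_symm_apply]
    rw [← h1, LinearEquiv.symm_apply_apply]
  set b' : (X⟦d⟧ : C) ⟶ ((Gobj S d X)⟦d⟧ : C) := (ψ _).symm (𝟙 _) with hb'
  have hbb' : b ≫ b' = 𝟙 _ := by
    have h1 : b ≫ b' = (ψ _).symm (b ≫ 𝟙 _) := (hψsymnat b (𝟙 _)).symm
    rw [Category.comp_id] at h1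
    rw [h1, hb, LinearEquiv.symm_apply_apply]
  have hb'b : b' ≫ b = 𝟙 _ := by
    have h1 : ψ _ b' = b' ≫ b := hψb _ b'
    rw [hb', LinearEquiv.apply_symm_apply] at h1
    exact h1.symm
  set c2 : (((Gobj S d X)⟦d⟧ : C) ≅ (X⟦d⟧ : C)) := ⟨b, b', hbb', hb'b⟩ with hc2
  set β := shiftFunctorCompIsoId C d (-d) (add_neg_cancel d) with hβ
  exact ⟨(β.app (Gobj S d X)).symm ≪≫ (shiftFunctor C (-d)).mapIso c2 ≪≫ β.app X⟩

lemma cy_iff_giso (X : C) :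
    IsCYObj k C d X ↔ (¬ IsZero X ∧ Nonempty ((Gobj S d X : C) ≅ X)) := by
  constructor
  · intro h
    exact ⟨h.1, giso_of_cy S d X h⟩
  · rintro ⟨hnz, h⟩
    exact cy_of_giso S d X hnz h

end CY

end CYPaper

namespace CYPaper

set_option linter.unusedSectionVars false
set_option maxHeartbeats 1600000

lemma fin_closure_univ {r : ℕ} (hr : 0 < r) (P : Fin r → Prop) (a : Fin r)
    (ha : P a) (hstep : ∀ j : Fin r, P j → P ⟨((j : ℕ) + 1) % r, Nat.mod_lt _ hr⟩) :
    ∀ b, P b := by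
  have key : ∀ n : ℕ, P ⟨((a : ℕ) + n) % r, Nat.mod_lt _ hr⟩ := by
    intro n
    induction n with
    | zero =>
      have he : (⟨((a : ℕ) + 0) % r, Nat.mod_lt _ hr⟩ : Fin r) = a := by
        apply Fin.ext
        simp [Nat.mod_eq_of_lt a.isLt]
      rw [he]; exact ha
    | succ n ih =>
      have h1 := hstep _ ih
      have he : (⟨((((a : ℕ) + n) % r : ℕ) + 1) % r, Nat.mod_lt _ hr⟩ : Fin r)
          = ⟨((a : ℕ) + (n + 1)) % r, Nat.mod_lt _ hr⟩ := by
        apply Fin.ext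
        show ((((a : ℕ) + n) % r) + 1) % r = ((a : ℕ) + (n + 1)) % r
        conv_rhs => rw [show (a : ℕ) + (n + 1) = ((a : ℕ) + n) + 1 by omega]
        rw [Nat.add_mod ((a : ℕ) + n) 1 r]
        rw [Nat.add_mod (((a : ℕ) + n) % r) 1 r]
        rw [Nat.mod_eq_of_lt (Nat.mod_lt _ hr)]
      rw [he] at h1
      exact h1
  intro b
  have hb := key (r + (b : ℕ) - (a : ℕ))
  have he : (⟨((a : ℕ) + (r + (b : ℕ) - (a : ℕ))) % r, Nat.mod_lt _ hr⟩ : Fin r) = b := by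
    apply Fin.ext
    show ((a : ℕ) + (r + (b : ℕ) - (a : ℕ))) % r = (b : ℕ)
    have ha' : (a : ℕ) < r := a.isLt
    have : (a : ℕ) + (r + (b : ℕ) - (a : ℕ)) = r + (b : ℕ) := by omega
    rw [this, Nat.add_mod_left, Nat.mod_eq_of_lt b.isLt]
  rw [he] at hb
  exact hb

variable {k : Type u} [Field k]
variable {C : Type u} [Category.{v} C] [Preadditive C] [Linear k C]
  [HasZeroObject C] [HasShift C ℤ] [∀ n : ℤ, (shiftFunctor C n).Additive]
  [Pretriangulated C] [HasFiniteBiproducts C]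
  [∀ X Y : C, FiniteDimensional k (X ⟶ Y)]

section OrbitSum

variable (S : Serre k C) (d : ℤ) {M : C}

lemma orbitSum_dsd :
    DSD (orbitSum S d M) (fun j : Fin (oG S d M) => Gpow S d (j : ℕ) M) :=
  dsd_biproduct _

lemma smd_orbitSum (hf : FiniteGOrbit S d M) : Smd M (orbitSum S d M) := by
  obtain ⟨hrpos, _⟩ := oG_mem S d hf
  have := (orbitSum_dsd S d (M := M)).smd ⟨0, hrpos⟩
  exact this

lemma orbitSum_not_isZero (hM : Indec M) (hf : FiniteGOrbit S d M) :
    ¬ IsZero (orbitSum S d M) := by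
  intro hz
  exact hM.1 ((smd_orbitSum S d hf).isZero hz)

lemma orbitSum_giso (hf : FiniteGOrbit S d M) :
    Nonempty ((Gobj S d (orbitSum S d M) : C) ≅ orbitSum S d M) := by
  obtain ⟨hrpos, ⟨hr⟩⟩ := oG_mem S d hf
  set r := oG S d M with hrdef
  haveI : NeZero r := ⟨by omega⟩
  haveI : (Gfun S d).Additive := gfun_additive S d
  set f : Fin r → C := fun j => Gpow S d (j : ℕ) M with hf'
  have iso1 : (Gfun S d).obj (⨁ f) ≅ ⨁ ((Gfun S d).obj ∘ f) :=
    (Gfun S d).mapBiproduct f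
  set e : Fin r ≃ Fin r := Equiv.addRight 1 with he
  have hval : ∀ j : Fin r, ((e j : Fin r) : ℕ) = ((j : ℕ) + 1) % r := by
    intro j
    show ((j + 1 : Fin r) : ℕ) = ((j : ℕ) + 1) % r
    rw [Fin.add_def]
    rw [Fin.val_one']
    rw [Nat.add_mod (j : ℕ) 1 r, Nat.mod_eq_of_lt j.isLt]
  have comps : ∀ j : Fin r, ((Gfun S d).obj ∘ f) j ≅ f (e j) := by
    intro j
    have h1 : ((Gfun S d).obj ∘ f) j = Gpow S d ((j : ℕ) + 1) M := rfl
    have h2 : f (e j) = Gpow S d (((j : ℕ) + 1) % r) M := by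
      rw [hf']
      show Gpow S d ((e j : Fin r) : ℕ) M = _
      rw [hval j]
    rw [h1, h2]
    exact (gpow_mod S d hf ((j : ℕ) + 1)).some
  obtain ⟨iso2⟩ := biprodIso e ((Gfun S d).obj ∘ f) f comps
  exact ⟨iso1 ≪≫ iso2⟩

lemma orbitSum_cy (hM : Indec M) (hf : FiniteGOrbit S d M) :
    IsCYObj k C d (orbitSum S d M) :=
  cy_of_giso S d _ (orbitSum_not_isZero S d hM hf) (orbitSum_giso S d hf)

include S d in
lemma cy_of_iso {Y Y' : C} (h : IsCYObj k C d Y) (e : Y ≅ Y') :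
    IsCYObj k C d Y' := by
  rw [cy_iff_giso S d] at h ⊢
  obtain ⟨hnz, ⟨hg⟩⟩ := h
  constructor
  · intro hz
    exact hnz (hz.of_iso e)
  · exact ⟨(Gfun S d).mapIso e.symm ≪≫ hg ≪≫ e⟩

lemma gpow_pairwise_ne (hf : FiniteGOrbit S d M) {j j' : Fin (oG S d M)}
    (hne : j ≠ j') : ¬ Nonempty (Gpow S d (j : ℕ) M ≅ Gpow S d (j' : ℕ) M) := by
  rcases lt_or_gt_of_ne (fun h => hne (Fin.ext h) : (j : ℕ) ≠ (j' : ℕ)) with h | h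
  · exact gpow_orbit_ne S d hf h j'.isLt
  · intro ⟨hiso⟩
    exact gpow_orbit_ne S d hf h j.isLt ⟨hiso.symm⟩

lemma orbitSum_min (hKS : KrullSchmidt C) (hM : Indec M)
    (hf : FiniteGOrbit S d M) : IsMinCYObj k d (orbitSum S d M) := by
  refine ⟨orbitSum_cy S d hM hf, ?_⟩
  intro A B hd hBnz hcyA
  obtain ⟨hrpos, ⟨hr⟩⟩ := oG_mem S d hf
  set r := oG S d M with hrdef
  set f : Fin r → C := fun j => Gpow S d (j : ℕ) M with hfdef
  have hAnz : ¬ IsZero A := hcyA.1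
  obtain ⟨hgA⟩ := giso_of_cy S d A hcyA
  obtain ⟨ιA, _, As, hneA, hindA, hdsdA⟩ :=
    exists_dsd_aux (k := k) (Module.finrank k (A ⟶ A)) A le_rfl hAnz
  obtain ⟨ιB, _, Bs, hneB, hindB, hdsdB⟩ :=
    exists_dsd_aux (k := k) (Module.finrank k (B ⟶ B)) B le_rfl hBnz
  have hcomb : DSD (orbitSum S d M) (Sum.elim As Bs) := dsd_sum hd hdsdA hdsdB
  obtain ⟨σ, hσ⟩ := ksu hKS (Fintype.card (Fin r)) le_rfl (orbitSum S d M) f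
    (Sum.elim As Bs) (orbitSum_dsd S d) hcomb
    (fun j => indec_gpow S d _ hM)
    (by rintro (a | b); exacts [hindA a, hindB b])
  set P : Fin r → Prop := fun j => ∃ i, σ j = Sum.inl i with hPdef
  have hsm : ∀ j : Fin r, Smd (Gpow S d (j : ℕ) M) A → P j := by
    intro j hjA
    obtain ⟨i, ⟨hi⟩⟩ := smd_exchange hKS hdsdA hindA (indec_gpow S d _ hM) hjA
    set j'' := σ.symm (Sum.inl i) with hj''
    have hiso2 : Nonempty (f j'' ≅ As i) := by
      have := hσ j''
      rw [hj'', Equiv.apply_symm_apply] at this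
      exact this
    obtain ⟨hiso2'⟩ := hiso2
    have : j = j'' := by
      by_contra hne
      exact gpow_pairwise_ne S d hf hne ⟨hi ≪≫ hiso2'.symm⟩
    rw [this, hj'']
    exact ⟨i, Equiv.apply_symm_apply σ _⟩
  have hstep : ∀ j : Fin r, P j →
      P ⟨((j : ℕ) + 1) % r, Nat.mod_lt _ hrpos⟩ := by
    intro j hPj
    obtain ⟨i, hi⟩ := hPj
    have hiso : Nonempty (f j ≅ As i) := by
      have := hσ j
      rw [hi] at this
      exact this
    obtain ⟨hiso'⟩ := hiso
    have h1 : Smd (Gpow S d (j : ℕ) M) A :=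
      Smd.of_iso_left hiso' (hdsdA.smd i)
    have h2 : Smd (Gpow S d ((j : ℕ) + 1) M) A := by
      have := (h1.map (Gfun S d)).of_iso_right hgA
      exact this
    have h3 : Smd (Gpow S d (((j : ℕ) + 1) % r) M) A :=
      Smd.of_iso_left (gpow_mod S d hf ((j : ℕ) + 1)).some.symm h2
    exact hsm _ h3
  have hex : ∃ j : Fin r, P j := by
    obtain ⟨i⟩ := hneA
    exact ⟨σ.symm (Sum.inl i), ⟨i, Equiv.apply_symm_apply σ _⟩⟩
  obtain ⟨a, ha⟩ := hex
  have hall : ∀ b, P b := fin_closure_univ hrpos P a ha hstep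
  obtain ⟨m⟩ := hneB
  obtain ⟨i, hi⟩ := hall (σ.symm (Sum.inr m))
  rw [Equiv.apply_symm_apply] at hi
  cases hi

lemma orbit_iso {M' : C} (hfM : FiniteGOrbit S d M) (hfM' : FiniteGOrbit S d M')
    (hsame : SameGOrbit S d M M') :
    Nonempty (orbitSum S d M ≅ orbitSum S d M') := by
  obtain ⟨j, ⟨hj⟩⟩ := hsame
  obtain ⟨hrpos, ⟨hr⟩⟩ := oG_mem S d hfM
  set r := oG S d M with hrdef
  haveI : NeZero r := ⟨by omega⟩
  have hreq : oG S d M' = r := oG_eq_of_same S d hfM ⟨j, ⟨hj⟩⟩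
  set t : Fin r := Fin.ofNat r j with ht
  set e' : Fin (oG S d M') ≃ Fin r := (finCongr hreq).trans (Equiv.addRight t) with he'
  have hcomp : ∀ i : Fin (oG S d M'),
      (fun i : Fin (oG S d M') => Gpow S d (i : ℕ) M') i
        ≅ (fun i' : Fin r => Gpow S d (i' : ℕ) M) (e' i) := by
    intro i
    have hval : ((e' i : Fin r) : ℕ) = (((i : ℕ) + j)) % r := by
      show (((finCongr hreq i) + t : Fin r) : ℕ) = _
      rw [Fin.add_def]
      have h1 : ((finCongr hreq i : Fin r) : ℕ) = (i : ℕ) := rfl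
      have h2 : ((t : Fin r) : ℕ) = j % r := by
        rw [ht, Fin.val_ofNat]
      rw [h1, h2]
      rw [Nat.add_mod (i : ℕ) j r, Nat.mod_eq_of_lt (show (i : ℕ) < r by
        have := i.isLt; omega)]
    show Gpow S d (i : ℕ) M' ≅ Gpow S d ((e' i : Fin r) : ℕ) M
    rw [hval]
    calc Gpow S d (i : ℕ) M' ≅ Gpow S d (i : ℕ) (Gpow S d j M) :=
          GpowIso S d _ hj.symm
    _ = Gpow S d ((i : ℕ) + j) M := (Gpow_add S d _ _ M).symm
    _ ≅ Gpow S d (((i : ℕ) + j) % r) M := (gpow_mod S d hfM _).some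
  obtain ⟨iso⟩ := biprodIso e'
    (fun i : Fin (oG S d M') => Gpow S d (i : ℕ) M')
    (fun i' : Fin r => Gpow S d (i' : ℕ) M) hcomp
  exact ⟨iso.symm⟩

lemma orbit_inj (hKS : KrullSchmidt C) {M' : C} (hM : Indec M) (hM' : Indec M')
    (hfM : FiniteGOrbit S d M) (hfM' : FiniteGOrbit S d M')
    (h : Nonempty (orbitSum S d M ≅ orbitSum S d M')) : SameGOrbit S d M M' := by
  obtain ⟨hiso⟩ := h
  have h1 : Smd M (orbitSum S d M') :=
    (smd_orbitSum S d hfM).of_iso_right hiso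
  obtain ⟨i, ⟨hi⟩⟩ := smd_exchange hKS (orbitSum_dsd S d (M := M'))
    (fun j => indec_gpow S d _ hM') hM h1
  exact same_orbit_symm S d hfM' ⟨(i : ℕ), ⟨hi.symm⟩⟩

lemma orbit_surj (hKS : KrullSchmidt C) (X : C) (hX : IsMinCYObj k d X) :
    ∃ M : C, Indec M ∧ FiniteGOrbit S d M ∧ Nonempty (X ≅ orbitSum S d M) := by
  classical
  have hcy := hX.1
  have hnz : ¬ IsZero X := hcy.1
  obtain ⟨cg⟩ := giso_of_cy S d X hcy
  obtain ⟨ι, _, Xs, hne, hind, hdsd⟩ :=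
    exists_dsd_aux (k := k) (Module.finrank k (X ⟶ X)) X le_rfl hnz
  obtain ⟨i₀⟩ := hne
  set M := Xs i₀ with hM
  have hMi : Indec M := hind i₀
  -- every Gpow n M is a summand of X
  have hsmd : ∀ n : ℕ, Smd (Gpow S d n M) X := by
    intro n
    induction n with
    | zero => exact hdsd.smd i₀
    | succ n ih => exact (ih.map (Gfun S d)).of_iso_right cg
  -- finite orbit
  have hfM : FiniteGOrbit S d M := by
    have hch : ∀ n : ℕ, ∃ i, Nonempty (Gpow S d n M ≅ Xs i) := by
      intro n
      exact smd_exchange hKS hdsd hind (indec_gpow S d _ hMi) (hsmd n)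
    set F : ℕ → ι := fun n => Classical.choose (hch n) with hF
    obtain ⟨n, n', hnn, hFn⟩ := Finite.exists_ne_map_eq_of_infinite F
    rcases Nat.lt_or_ge n n' with hlt | hge
    · obtain ⟨h1⟩ := Classical.choose_spec (hch n)
      obtain ⟨h2⟩ := Classical.choose_spec (hch n')
      have h1' : Gpow S d n M ≅ Xs (F n) := h1
      have h2' : Gpow S d n' M ≅ Xs (F n') := h2
      rw [← hFn] at h2'
      have hiso : Nonempty (Gpow S d n M ≅ Gpow S d n' M) := ⟨h1' ≪≫ h2'.symm⟩
      have heq : Gpow S d n' M = Gpow S d n (Gpow S d (n' - n) M) := by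
        rw [← Gpow_add]
        congr 1
        omega
      rw [heq] at hiso
      obtain ⟨hc⟩ := gpow_cancel S d n hiso
      exact ⟨n' - n, by omega, ⟨hc.symm⟩⟩
    · have hlt : n' < n := by omega
      obtain ⟨h1⟩ := Classical.choose_spec (hch n)
      obtain ⟨h2⟩ := Classical.choose_spec (hch n')
      have h1' : Gpow S d n M ≅ Xs (F n) := h1
      have h2' : Gpow S d n' M ≅ Xs (F n') := h2
      rw [← hFn] at h2'
      have hiso : Nonempty (Gpow S d n' M ≅ Gpow S d n M) := ⟨h2' ≪≫ h1'.symm⟩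
      have heq : Gpow S d n M = Gpow S d n' (Gpow S d (n - n') M) := by
        rw [← Gpow_add]
        congr 1
        omega
      rw [heq] at hiso
      obtain ⟨hc⟩ := gpow_cancel S d n' hiso
      exact ⟨n - n', by omega, ⟨hc.symm⟩⟩
  -- X is the orbit sum
  obtain ⟨hrpos, ⟨hr⟩⟩ := oG_mem S d hfM
  set r := oG S d M with hrdef
  set f : Fin r → C := fun j => Gpow S d (j : ℕ) M with hfdef
  have hch : ∀ j : Fin r, ∃ i, Nonempty (f j ≅ Xs i) := by
    intro j
    exact smd_exchange hKS hdsd hind (indec_gpow S d _ hMi) (hsmd (j : ℕ))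
  set g : Fin r → ι := fun j => Classical.choose (hch j) with hg
  have hgiso : ∀ j : Fin r, Nonempty (f j ≅ Xs (g j)) :=
    fun j => Classical.choose_spec (hch j)
  have hginj : Function.Injective g := by
    intro j j' hjj
    by_contra hne
    obtain ⟨h1⟩ := hgiso j
    obtain ⟨h2⟩ := hgiso j'
    rw [hjj] at h1
    exact gpow_pairwise_ne S d hfM hne ⟨h1 ≪≫ h2.symm⟩
  by_cases hsurj : Function.Surjective g
  · set eb : Fin r ≃ ι := Equiv.ofBijective g ⟨hginj, hsurj⟩ with heb
    obtain ⟨iso1⟩ := hdsd.isoBiproduct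
    obtain ⟨iso2⟩ := biprodIso eb f Xs (fun j => (hgiso j).some)
    exact ⟨M, hMi, hfM, ⟨iso1 ≪≫ iso2.symm⟩⟩
  · exfalso
    rw [Function.Surjective] at hsurj
    push_neg at hsurj
    obtain ⟨i1, hi1⟩ := hsurj
    have hdec := dsd_partition hdsd (fun i => i ∈ Set.range g)
    have hBnz : ¬ IsZero (⨁ (fun i : {i : ι // ¬ i ∈ Set.range g} => Xs i)) := by
      intro hz
      have hsmdB : Smd (Xs i1) (⨁ (fun i : {i : ι // ¬ i ∈ Set.range g} => Xs i)) := by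
        have := (dsd_biproduct (fun i : {i : ι // ¬ i ∈ Set.range g} => Xs i.1)).smd
          ⟨i1, by rintro ⟨j, hj⟩; exact hi1 j hj⟩
        exact this
      exact (hind i1).1 (hsmdB.isZero hz)
    have hAiso : Nonempty (orbitSum S d M ≅ ⨁ (fun i : {i : ι // i ∈ Set.range g} => Xs i)) := by
      have hbij : Function.Bijective
          (fun j : Fin r => (⟨g j, ⟨j, rfl⟩⟩ : {i : ι // i ∈ Set.range g})) := by
        constructor
        · intro j j' hjj
          exact hginj (congrArg Subtype.val hjj)
        · rintro ⟨i, ⟨j, hj⟩⟩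
          exact ⟨j, Subtype.ext hj⟩
      obtain ⟨iso⟩ := biprodIso (Equiv.ofBijective _ hbij) f
        (fun i : {i : ι // i ∈ Set.range g} => Xs i.1)
        (fun j => (hgiso j).some)
      exact ⟨iso⟩
    have hAcy : IsCYObj k C d (⨁ (fun i : {i : ι // i ∈ Set.range g} => Xs i)) :=
      cy_of_iso S d (orbitSum_cy S d hMi hfM) hAiso.some
    exact hX.2 _ _ hdec hBnz hAcy

end OrbitSum

end CYPaper

/-- **Statement 9** (Theorem 4.2 (ii)). Let `𝒜` be a Hom-finite Krull-Schmidt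
triangulated `k`-category with Serre functor `F`, `d ∈ ℤ` and `G := [-d] ∘ F`. Then
`𝒪_M ↦ ⊕_{X ∈ 𝒪_M} X = M ⊕ G(M) ⊕ ⋯ ⊕ G^{o(G_M)-1}(M)` is a one-to-one
correspondence between the finite `⟨G⟩`-orbits of `Ind(𝒜)` and the isomorphism
classes of minimal `d`-th Calabi-Yau objects: it is constant on orbits, it sends
orbits of indecomposables with finite orbit to minimal `d`-th CY objects, it is
injective on orbits, and every minimal `d`-th CY object arises this way. -/
theorem stmt_9 (k : Type u) [Field k] (C : Type u) [Category.{v} C] [Preadditive C]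
    [Linear k C] [HasZeroObject C] [HasShift C ℤ]
    [∀ n : ℤ, (shiftFunctor C n).Additive] [Pretriangulated C]
    [HasFiniteBiproducts C]
    [∀ X Y : C, FiniteDimensional k (X ⟶ Y)]
    (hKS : KrullSchmidt C) (S : Serre k C) (d : ℤ) :
    -- the map is well defined on isomorphism classes of orbits
    (∀ M M' : C, Indec M → Indec M' → FiniteGOrbit S d M → FiniteGOrbit S d M' →
      SameGOrbit S d M M' → Nonempty (orbitSum S d M ≅ orbitSum S d M')) ∧
    -- it takes values in minimal d-th CY objects
    (∀ M : C, Indec M → FiniteGOrbit S d M → IsMinCYObj k d (orbitSum S d M)) ∧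
    -- it is injective
    (∀ M M' : C, Indec M → Indec M' → FiniteGOrbit S d M → FiniteGOrbit S d M' →
      Nonempty (orbitSum S d M ≅ orbitSum S d M') → SameGOrbit S d M M') ∧
    -- it is surjective
    (∀ X : C, IsMinCYObj k d X →
      ∃ M : C, Indec M ∧ FiniteGOrbit S d M ∧ Nonempty (X ≅ orbitSum S d M)) := by
  refine ⟨?_, ?_, ?_, ?_⟩
  · intro M M' hM hM' hfM hfM' hsame
    exact orbit_iso S d hfM hfM' hsame
  · intro M hM hfM
    exact orbitSum_min S d hKS hM hfM
  · intro M M' hM hM' hfM hfM' h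
    exact orbit_inj S d hKS hM hM' hfM hfM' h
  · intro X hX
    exact orbit_surj S d hKS X hX
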